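/- arXiv:2308.08035 — 3 statements merged into one kernel-verified Lean document; each statement's English description precedes it below -/
import Mathlib

section
/- Let b_1,…,b_d be pairwise coprime integers ≥ 2 and k_1,…,k_d nonnegative integers, and let M = ∏_{j=1}^d b_j^{k_j}. Among any M consecutive nonnegative integers i, exactly one has its Halton point (φ_{b_1}(i),…,φ_{b_d}(i)) in each elementary box ∏_{j=1}^d [r_j/b_j^{k_j}, (r_j+1)/b_j^{k_j}) for r_j ∈ {0,…,b_j^{k_j}−1}. -/
noncomputable def radInv (b i : ℕ) : ℝ :=
  ∑ ℓ ∈ Finset.range (Nat.digits b i).length,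
    ((Nat.digits b i).getD ℓ 0 : ℝ) / (b : ℝ) ^ (ℓ + 1)

/-- reversal of the first `k` base-`b` digits -/
def nu (b : ℕ) : ℕ → ℕ → ℕ
  | 0, _ => 0
  | k+1, i => (i % b) * b ^ k + nu b k (i / b)

lemma nu_lt (b : ℕ) (hb : 1 ≤ b) : ∀ k i, nu b k i < b ^ k
  | 0, _ => by simp [nu]
  | k+1, i => by
    have h1 : i % b < b := Nat.mod_lt _ hb
    have h2 := nu_lt b hb k (i / b)
    have : (i % b) * b ^ k + nu b k (i / b) < (i % b + 1) * b ^ k := by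
      rw [add_mul, one_mul]; omega
    calc nu b (k+1) i < (i % b + 1) * b ^ k := this
      _ ≤ b * b ^ k := by
        exact Nat.mul_le_mul_right _ (by omega)
      _ = b ^ (k+1) := by ring

lemma nu_succ_top (b : ℕ) : ∀ k i, nu b (k+1) i = nu b k i * b + i / b ^ k % b
  | 0, i => by simp [nu]
  | k+1, i => by
    show (i % b) * b ^ (k+1) + nu b (k+1) (i / b) = ((i % b) * b ^ k + nu b k (i / b)) * b + _
    rw [nu_succ_top b k (i / b), Nat.div_div_eq_div_mul, ← pow_succ']
    ring

lemma nu_mod (b : ℕ) (hb : 1 ≤ b) : ∀ k i, nu b k (i % b ^ k) = nu b k i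
  | 0, i => by simp [nu, Nat.mod_one]
  | k+1, i => by
    show (i % b ^ (k+1) % b) * b ^ k + nu b k (i % b ^ (k+1) / b) = (i % b) * b ^ k + nu b k (i / b)
    have h1 : i % b ^ (k+1) % b = i % b :=
      Nat.mod_mod_of_dvd _ (dvd_pow_self b (Nat.succ_ne_zero k))
    have h2 : i % b ^ (k+1) / b = i / b % b ^ k := by
      rw [pow_succ', Nat.mod_mul_right_div_self]
    rw [h1, h2, nu_mod b hb k]

lemma nu_nu (b : ℕ) (hb : 1 ≤ b) : ∀ k c, nu b k (nu b k c) = c % b ^ k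
  | 0, c => by simp [nu, Nat.mod_one]
  | k+1, c => by
    have h2 := nu_lt b hb k (c / b)
    have hmb : c % b < b := Nat.mod_lt _ hb
    set m := nu b (k+1) c with hm
    have hmval : m = (c % b) * b ^ k + nu b k (c / b) := rfl
    have hmod : m % b ^ k = nu b k (c / b) := by
      rw [hmval, Nat.add_mod, Nat.mul_mod_left]
      simp [Nat.mod_eq_of_lt h2]
    have hdiv : m / b ^ k = c % b := by
      rw [hmval, mul_comm, Nat.mul_add_div (Nat.pow_pos hb),
        Nat.div_eq_of_lt h2, add_zero]
    rw [nu_succ_top, ← nu_mod b hb k m, hmod, nu_nu b hb k, hdiv, Nat.mod_eq_of_lt hmb,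
      pow_succ', Nat.mod_mul]
    ring

lemma radInv_nonneg (b i : ℕ) : 0 ≤ radInv b i :=
  Finset.sum_nonneg fun ℓ _ => div_nonneg (by positivity) (by positivity)

lemma radInv_step (b i : ℕ) (hb : 2 ≤ b) :
    radInv b i = ((i % b : ℕ) : ℝ) / b + radInv b (i / b) / b := by
  rcases Nat.eq_zero_or_pos i with h | h
  · simp [radInv, h]
  · rw [radInv, Nat.digits_def' (by omega) h]
    simp only [List.length_cons]
    rw [Finset.sum_range_succ']
    simp only [List.getD_cons_succ, List.getD_cons_zero]
    rw [radInv, Finset.sum_div, add_comm]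
    congr 1
    · norm_num
    · apply Finset.sum_congr rfl
      intro ℓ _
      rw [div_div, ← pow_succ]

lemma radInv_lt_one (b : ℕ) (hb : 2 ≤ b) : ∀ i, radInv b i < 1 := by
  intro i
  induction i using Nat.strong_induction_on with
  | _ i ih =>
    rcases Nat.eq_zero_or_pos i with h | h
    · simp [radInv, h]
    · rw [radInv_step b i hb]
      have hbR : (0:ℝ) < b := by positivity
      have h1 : ((i % b : ℕ) : ℝ) ≤ (b : ℝ) - 1 := by
        have := Nat.mod_lt i (show 0 < b by omega)
        have h' : (i % b : ℕ) ≤ b - 1 := by omega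
        have hcast : ((i % b : ℕ) : ℝ) ≤ ((b - 1 : ℕ) : ℝ) := by exact_mod_cast h'
        rw [Nat.cast_sub (by omega)] at hcast
        simpa using hcast
      have h2 : radInv b (i / b) < 1 := ih _ (Nat.div_lt_self h (by omega))
      have h3a : ((i % b : ℕ) : ℝ) / b ≤ ((b:ℝ) - 1) / b := by gcongr
      have h3b : radInv b (i / b) / b < 1 / b := by gcongr
      have h4 : ((b:ℝ) - 1) / b + 1 / b = 1 := by field_simp; ring
      linarith [h3a, h3b]

lemma radInv_split (b : ℕ) (hb : 2 ≤ b) : ∀ (k i : ℕ),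
    radInv b i = (nu b k i : ℝ) / (b : ℝ) ^ k + radInv b (i / b ^ k) / (b : ℝ) ^ k
  | 0, i => by simp [nu]
  | k+1, i => by
    have hb0 : (b:ℝ) ≠ 0 := by positivity
    have hbk : (b:ℝ) ^ k ≠ 0 := by positivity
    rw [radInv_split b hb k i, radInv_step b (i / b ^ k) hb, nu_succ_top,
      Nat.div_div_eq_div_mul, ← pow_succ]
    push_cast
    field_simp
    ring

lemma mem_box_iff (b k i r : ℕ) (hb : 2 ≤ b) (hr : r < b ^ k) :
    ((r : ℝ) / (b : ℝ) ^ k ≤ radInv b i ∧ radInv b i < ((r:ℝ)+1) / (b : ℝ) ^ k) ↔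
      nu b k i = r := by
  have hbk : (0:ℝ) < (b:ℝ) ^ k := by positivity
  have hsplit := radInv_split b hb k i
  set t := radInv b (i / b ^ k) with ht
  have h0 : 0 ≤ t := radInv_nonneg _ _
  have h1 : t < 1 := radInv_lt_one b hb _
  have key : radInv b i * (b:ℝ) ^ k = (nu b k i : ℝ) + t := by
    rw [hsplit]; field_simp
  constructor
  · rintro ⟨hl, hu⟩
    have hl' : (r : ℝ) ≤ (nu b k i : ℝ) + t := by
      rw [← key]; rw [div_le_iff₀ hbk] at hl; linarith
    have hu' : (nu b k i : ℝ) + t < (r : ℝ) + 1 := by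
      rw [← key]; rw [lt_div_iff₀ hbk] at hu; linarith
    have e1 : (r : ℝ) < (nu b k i : ℝ) + 1 := by linarith
    have e2 : (nu b k i : ℝ) < (r : ℝ) + 1 := by linarith
    have e1' : r < nu b k i + 1 := by exact_mod_cast e1
    have e2' : nu b k i < r + 1 := by exact_mod_cast e2
    omega
  · rintro rfl
    constructor
    · rw [div_le_iff₀ hbk, key]; linarith
    · rw [lt_div_iff₀ hbk, key]; linarith

lemma nu_eq_iff (b k i r : ℕ) (hb : 1 ≤ b) (hr : r < b ^ k) :
    nu b k i = r ↔ i % b ^ k = nu b k r := by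
  constructor
  · intro h
    have h1 : nu b k (i % b ^ k) = r := by rw [nu_mod b hb]; exact h
    have h2 := nu_nu b hb k (i % b ^ k)
    rw [h1] at h2
    rw [h2]
    exact (Nat.mod_eq_of_lt (Nat.mod_lt _ (Nat.pow_pos hb))).symm
  · intro h
    rw [← nu_mod b hb, h, nu_nu b hb, Nat.mod_eq_of_lt hr]

theorem stmt8 (d : ℕ) (hd : 1 ≤ d) (b k : Fin d → ℕ)
    (hb : ∀ j, 2 ≤ b j)
    (hcop : ∀ i j : Fin d, i ≠ j → Nat.Coprime (b i) (b j))
    (M : ℕ) (hM : M = ∏ j, b j ^ k j)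
    (s : ℕ) (r : Fin d → ℕ) (hr : ∀ j, r j < b j ^ k j) :
    ∃! i : ℕ, i ∈ Finset.Ico s (s + M) ∧
      ∀ j, (r j : ℝ) / (b j : ℝ) ^ k j ≤ radInv (b j) i ∧
        radInv (b j) i < ((r j : ℝ) + 1) / (b j : ℝ) ^ k j := by
  set m : Fin d → ℕ := fun j => b j ^ k j with hm
  have hb1 : ∀ j, 1 ≤ b j := fun j => le_trans one_le_two (hb j)
  have hm1 : ∀ j, 0 < m j := fun j => Nat.pow_pos (hb1 j)
  set c : Fin d → ℕ := fun j => nu (b j) (k j) (r j) with hc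
  have hclt : ∀ j, c j < m j := fun j => nu_lt _ (hb1 j) _ _
  -- box condition ↔ residues
  have hbox : ∀ i : ℕ, (∀ j, (r j : ℝ) / (b j : ℝ) ^ k j ≤ radInv (b j) i ∧
        radInv (b j) i < ((r j : ℝ) + 1) / (b j : ℝ) ^ k j) ↔ ∀ j, i % m j = c j := by
    intro i
    refine forall_congr' fun j => ?_
    rw [mem_box_iff (b j) (k j) i (r j) (hb j) (hr j), nu_eq_iff _ _ _ _ (hb1 j) (hr j)]
  -- injectivity on any window of length M
  have inj : ∀ i i', i ∈ Finset.Ico s (s + M) → i' ∈ Finset.Ico s (s + M) →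
      (∀ j, i % m j = i' % m j) → i = i' := by
    intro i i' hi hi' hmod
    have hdvd : ∀ j, ((m j : ℤ)) ∣ (i' : ℤ) - i := fun j =>
      (Nat.ModEq.dvd (show i ≡ i' [MOD m j] from hmod j))
    have hpair : (↑(Finset.univ : Finset (Fin d)) : Set (Fin d)).Pairwise
        (Function.onFun IsCoprime fun j => (m j : ℤ)) := by
      intro x _ y _ hxy
      exact Nat.isCoprime_iff_coprime.mpr (Nat.Coprime.pow _ _ (hcop x y hxy))
    have hprod : ((M : ℤ)) ∣ (i' : ℤ) - i := by
      have h2 := Finset.prod_dvd_of_coprime hpair (fun j _ => hdvd j)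
      simp only [hm] at h2
      push_cast at h2
      rw [hM]; push_cast; exact h2
    simp only [Finset.mem_Ico] at hi hi'
    have habs : |(i' : ℤ) - i| < M := by rw [abs_sub_lt_iff]; constructor <;> push_cast <;> omega
    have := Int.eq_zero_of_abs_lt_dvd hprod habs
    omega
  -- existence via counting
  have hcard : (Fintype.piFinset fun j => Finset.range (m j)).card ≤ (Finset.Ico s (s + M)).card := by
    rw [Fintype.card_piFinset, Nat.card_Ico]
    simp [hM]
  have hmaps : ∀ (a : ℕ) (_ : a ∈ Finset.Ico s (s + M)),
      (fun j => a % m j) ∈ Fintype.piFinset fun j => Finset.range (m j) := by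
    intro a _
    rw [Fintype.mem_piFinset]
    exact fun j => Finset.mem_range.mpr (Nat.mod_lt _ (hm1 j))
  have hcmem : c ∈ Fintype.piFinset fun j => Finset.range (m j) := by
    rw [Fintype.mem_piFinset]
    exact fun j => Finset.mem_range.mpr (hclt j)
  obtain ⟨a, ha, hac⟩ := Finset.surj_on_of_inj_on_of_card_le (fun a _ => fun j => a % m j)
    hmaps (fun a₁ a₂ h₁ h₂ h => inj a₁ a₂ h₁ h₂ (fun j => congrFun h j)) hcard c hcmem
  refine ⟨a, ⟨ha, (hbox a).mpr fun j => (congrFun hac j).symm⟩, ?_⟩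
  rintro y ⟨hy, hybox⟩
  exact inj y a hy ha fun j => by rw [(hbox y).mp hybox j, (congrFun hac j).symm]
end

section
/- If v ⊆ u are nonempty finite index sets (with pairwise coprime bases b_j ≥ 2), then sup_{n≥1} G_{v,0}(n) ≤ sup_{n≥1} G_{u,0}(n): the supremum of gain coefficients is monotone under taking supersets of coordinates. -/
/-- Number of pairs (i,i') with 0 ≤ i,i' < n and i ≡ i' (mod m). -/
def Cpairs (m n : ℕ) : ℕ :=
  ((Finset.range n ×ˢ Finset.range n).filter fun p => p.1 % m = p.2 % m).card

/-- `m_{u,v,k} = ∏_{j∈v} b_j^{k_j+1} · ∏_{j∈u∖v} b_j^{k_j}`. -/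
def mProd (b k : ℕ → ℕ) (u v : Finset ℕ) : ℕ :=
  (∏ j ∈ v, b j ^ (k j + 1)) * ∏ j ∈ u \ v, b j ^ k j

/-- Unnormalized gain `G̃_{u,k}(n) = ∑_{v⊆u} H_{u,v} C(m_{u,v,k}, n)`. -/
noncomputable def Gt (b k : ℕ → ℕ) (u : Finset ℕ) (n : ℕ) : ℝ :=
  ∑ v ∈ u.powerset,
    (∏ j ∈ v, (b j : ℝ)) * (-1) ^ (u \ v).card * (Cpairs (mProd b k u v) n : ℝ)

/-- Normalized gain coefficient `G_{u,k}(n)`. -/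
noncomputable def Gn (b k : ℕ → ℕ) (u : Finset ℕ) (n : ℕ) : ℝ :=
  Gt b k u n / (n * ∏ j ∈ u, ((b j : ℝ) - 1))


open Finset

def cnt (m n c : ℕ) : ℕ := ((range n).filter fun i => i % m = c).card

lemma cpairs_eq_sum (m n : ℕ) (hm : 0 < m) :
    Cpairs m n = ∑ c ∈ range m, (cnt m n c)^2 := by
  unfold Cpairs
  rw [card_eq_sum_card_fiberwise (f := fun p => p.1 % m) (t := range m)
    (fun p _ => mem_range.2 (Nat.mod_lt _ hm))]
  refine sum_congr rfl fun c _ => ?_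
  have : (cnt m n c)^2 = #(((range n).filter fun i => i % m = c) ×ˢ ((range n).filter fun i => i % m = c)) := by
    rw [card_product, cnt, sq]
  rw [this]
  congr 1
  ext p
  simp only [mem_filter, mem_product]
  constructor
  · rintro ⟨⟨⟨h1, h2⟩, h3⟩, h4⟩
    exact ⟨⟨h1, h4⟩, ⟨h2, h3 ▸ h4⟩⟩
  · rintro ⟨⟨h1, h4⟩, ⟨h2, h5⟩⟩
    exact ⟨⟨⟨h1, h2⟩, h4.trans h5.symm⟩, h4⟩

lemma sum_cnt (m n : ℕ) (hm : 0 < m) : ∑ c ∈ range m, cnt m n c = n := by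
  have := card_eq_sum_card_fiberwise (f := fun i => i % m) (s := range n) (t := range m)
    (fun i _ => mem_range.2 (Nat.mod_lt _ hm))
  rw [card_range] at this
  exact this.symm

lemma cnt_le (m n c : ℕ) (hm : 0 < m) : cnt m n c ≤ n / m + 1 := by
  unfold cnt
  have h := card_le_card_of_injOn (s := (range n).filter fun i => i % m = c)
      (f := fun i => i / m) (t := range (n / m + 1)) ?_ ?_
  · rwa [card_range] at h
  · intro i hi
    simp only [mem_coe, mem_filter, mem_range] at hi ⊢
    exact Nat.lt_succ_of_le (Nat.div_le_div_right hi.1.le)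
  · intro i hi j hj hij
    simp only [coe_filter, Set.mem_setOf_eq, mem_range] at hi hj
    have hij' : i / m = j / m := by simpa using hij
    have h1 := Nat.div_add_mod i m
    have h2 := Nat.div_add_mod j m
    rw [hij'] at h1
    omega

lemma cpairs_lower (m n : ℕ) (hm : 0 < m) : n^2 ≤ m * Cpairs m n := by
  rw [cpairs_eq_sum m n hm]
  calc n^2 = (∑ c ∈ range m, cnt m n c)^2 := by rw [sum_cnt m n hm]
    _ ≤ #(range m) * ∑ c ∈ range m, (cnt m n c)^2 := sq_sum_le_card_mul_sum_sq
    _ = m * ∑ c ∈ range m, (cnt m n c)^2 := by rw [card_range]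

lemma cpairs_upper (m n : ℕ) (hm : 0 < m) : m * Cpairs m n ≤ n^2 + m * n := by
  rw [cpairs_eq_sum m n hm]
  have h1 : ∑ c ∈ range m, (cnt m n c)^2 ≤ (n / m + 1) * n := by
    have : ∑ c ∈ range m, (cnt m n c)^2 ≤ ∑ c ∈ range m, (n / m + 1) * cnt m n c := by
      apply sum_le_sum
      intro c _
      rw [sq]
      exact Nat.mul_le_mul_right _ (cnt_le m n c hm)
    rwa [← mul_sum, sum_cnt m n hm] at this
  calc m * ∑ c ∈ range m, (cnt m n c)^2 ≤ m * ((n / m + 1) * n) := Nat.mul_le_mul_left _ h1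
    _ = m * (n/m) * n + m * n := by ring
    _ ≤ n * n + m * n := by
        have := Nat.div_mul_le_self n m
        have : m * (n / m) ≤ n := by rw [mul_comm]; exact Nat.div_mul_le_self n m
        exact Nat.add_le_add_right (Nat.mul_le_mul_right _ this) _
    _ = n^2 + m*n := by ring

/-- the pair-sum form -/
noncomputable def Fp (b : ℕ → ℕ) (s : Finset ℕ) (n : ℕ) : ℝ :=
  ∑ i ∈ range n, ∑ i' ∈ range n,
    ∏ j ∈ s, ((b j : ℝ) * (if i % b j = i' % b j then 1 else 0) - 1)

lemma mProd_zero (b : ℕ → ℕ) (u w : Finset ℕ) :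
    mProd b (fun _ => 0) u w = ∏ j ∈ w, b j := by
  simp [mProd]

/-- CRT for finite products -/
lemma modeq_prod (b : ℕ → ℕ) (t : Finset ℕ)
    (hcop : ∀ i ∈ t, ∀ j ∈ t, i ≠ j → Nat.Coprime (b i) (b j)) (i i' : ℕ) :
    (∀ j ∈ t, i % b j = i' % b j) ↔ i % (∏ j ∈ t, b j) = i' % (∏ j ∈ t, b j) := by
  induction t using Finset.cons_induction with
  | empty => simp [Nat.mod_one]
  | cons a s ha ih =>
    rw [Finset.prod_cons]
    have hcop' : ∀ i ∈ s, ∀ j ∈ s, i ≠ j → Nat.Coprime (b i) (b j) := by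
      intro x hx y hy hxy
      exact hcop x (mem_cons_of_mem hx) y (mem_cons_of_mem hy) hxy
    have hca : Nat.Coprime (b a) (∏ j ∈ s, b j) := by
      apply Nat.Coprime.prod_right
      intro y hy
      exact hcop a (mem_cons_self a s) y (mem_cons_of_mem hy) (by rintro rfl; exact ha hy)
    constructor
    · intro h
      have h1 : i ≡ i' [MOD b a] := h a (mem_cons_self a s)
      have h2 : i ≡ i' [MOD ∏ j ∈ s, b j] := (ih hcop').1 fun j hj => h j (mem_cons_of_mem hj)
      exact (Nat.modEq_and_modEq_iff_modEq_mul hca).1 ⟨h1, h2⟩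
    · intro h
      have h2 := (Nat.modEq_and_modEq_iff_modEq_mul hca).2 h
      intro j hj
      rcases Finset.mem_cons.1 hj with rfl | hj
      · exact h2.1
      · exact (ih hcop').2 h2.2 j hj

lemma cpairs_eq_double_sum (m n : ℕ) :
    (Cpairs m n : ℝ) = ∑ i ∈ range n, ∑ i' ∈ range n,
      (if i % m = i' % m then (1:ℝ) else 0) := by
  unfold Cpairs
  rw [← Finset.sum_boole, Finset.sum_product]

lemma Gt_eq_Fp (b : ℕ → ℕ) (u : Finset ℕ) (n : ℕ)
    (hcop : ∀ i ∈ u, ∀ j ∈ u, i ≠ j → Nat.Coprime (b i) (b j)) :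
    Gt b (fun _ => 0) u n = Fp b u n := by
  unfold Fp
  symm
  have key : ∀ i i' : ℕ,
      ∏ j ∈ u, ((b j:ℝ) * (if i % b j = i' % b j then 1 else 0) - 1)
      = ∑ t ∈ u.powerset, (∏ j ∈ t, (b j:ℝ)) * (-1)^(u\t).card *
          (if i % (∏ j ∈ t, b j) = i' % (∏ j ∈ t, b j) then (1:ℝ) else 0) := by
    intro i i'
    have h1 : ∏ j ∈ u, ((b j:ℝ) * (if i % b j = i' % b j then 1 else 0) - 1)
        = ∏ j ∈ u, ((b j:ℝ) * (if i % b j = i' % b j then 1 else 0) + (-1)) := by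
      refine Finset.prod_congr rfl fun j _ => by ring
    rw [h1, Finset.prod_add]
    refine Finset.sum_congr rfl fun t ht => ?_
    have ht' := Finset.mem_powerset.1 ht
    have hcopt : ∀ i ∈ t, ∀ j ∈ t, i ≠ j → Nat.Coprime (b i) (b j) :=
      fun x hx y hy hxy => hcop x (ht' hx) y (ht' hy) hxy
    rw [Finset.prod_const, Finset.prod_mul_distrib, Finset.prod_boole]
    rw [if_congr (modeq_prod b t hcopt i i') rfl rfl]
    ring
  calc ∑ i ∈ range n, ∑ i' ∈ range n,
        ∏ j ∈ u, ((b j:ℝ) * (if i % b j = i' % b j then 1 else 0) - 1)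
      = ∑ t ∈ u.powerset, ∑ i ∈ range n, ∑ i' ∈ range n,
          (∏ j ∈ t, (b j:ℝ)) * (-1)^(u\t).card *
          (if i % (∏ j ∈ t, b j) = i' % (∏ j ∈ t, b j) then (1:ℝ) else 0) := by
        simp_rw [key]
        calc ∑ i ∈ range n, ∑ i' ∈ range n, ∑ t ∈ u.powerset, ((∏ j ∈ t, (b j:ℝ)) * (-1)^(u\t).card *
          (if i % (∏ j ∈ t, b j) = i' % (∏ j ∈ t, b j) then (1:ℝ) else 0))
            = ∑ i ∈ range n, ∑ t ∈ u.powerset, ∑ i' ∈ range n, ((∏ j ∈ t, (b j:ℝ)) * (-1)^(u\t).card *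
          (if i % (∏ j ∈ t, b j) = i' % (∏ j ∈ t, b j) then (1:ℝ) else 0)) :=
            Finset.sum_congr rfl fun i _ => Finset.sum_comm
          _ = ∑ t ∈ u.powerset, ∑ i ∈ range n, ∑ i' ∈ range n, ((∏ j ∈ t, (b j:ℝ)) * (-1)^(u\t).card *
          (if i % (∏ j ∈ t, b j) = i' % (∏ j ∈ t, b j) then (1:ℝ) else 0)) := Finset.sum_comm
    _ = Gt b (fun _ => 0) u n := by
        unfold Gt
        refine Finset.sum_congr rfl fun t _ => ?_
        rw [mProd_zero, cpairs_eq_double_sum, Finset.mul_sum]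
        exact Finset.sum_congr rfl fun i _ => (Finset.mul_sum _ _ _).symm


lemma sum_range_mul' (n P : ℕ) (h : ℕ → ℝ) :
    ∑ i ∈ range (n * P), h i = ∑ a ∈ range n, ∑ ρ ∈ range P, h (a * P + ρ) := by
  induction n with
  | zero => simp
  | succ n ih =>
    rw [Nat.succ_mul, Finset.sum_range_add, ih, Finset.sum_range_succ]

lemma mod_shift (bj P ρ a a' : ℕ) (hc : Nat.gcd bj P = 1) :
    ((a * P + ρ) % bj = (a' * P + ρ) % bj) ↔ (a % bj = a' % bj) := by
  constructor
  · intro h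
    have h1 : a * P + ρ ≡ a' * P + ρ [MOD bj] := h
    have h2 : a * P ≡ a' * P [MOD bj] := Nat.ModEq.add_right_cancel' ρ h1
    exact Nat.ModEq.cancel_right_of_coprime hc h2
  · intro h
    have h1 : a * P ≡ a' * P [MOD bj] := Nat.ModEq.mul_right P h
    exact Nat.ModEq.add_right ρ h1

lemma scaling (b : ℕ → ℕ) (v W : Finset ℕ) (hdisj : Disjoint v W)
    (hbW : ∀ j ∈ W, 1 ≤ b j)
    (hcopW : ∀ i ∈ W, ∀ j ∈ W, i ≠ j → Nat.Coprime (b i) (b j))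
    (hcopv : ∀ j ∈ v, Nat.gcd (b j) (∏ l ∈ W, b l) = 1) (n : ℕ) :
    ∑ w ∈ W.powerset, Fp b (v ∪ w) (n * ∏ j ∈ W, b j)
      = (∏ j ∈ W, (b j : ℝ))^2 * Fp b v n := by
  have hP0 : 0 < ∏ l ∈ W, b l := Finset.prod_pos fun j hj => hbW j hj
  set P := ∏ l ∈ W, b l with hP
  set N := n * P with hN
  set Φ : ℕ → ℕ → ℝ :=
    fun i i' => ∏ j ∈ v, ((b j : ℝ) * (if i % b j = i' % b j then 1 else 0) - 1) with hΦ
  -- step 1+2: push the powerset sum inside and evaluate it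
  have step12 : ∑ w ∈ W.powerset, Fp b (v ∪ w) N
      = ∑ i ∈ range N, ∑ i' ∈ range N,
          Φ i i' * ((P : ℝ) * (if i % P = i' % P then 1 else 0)) := by
    have h1 : ∀ w ∈ W.powerset, Fp b (v ∪ w) N
        = ∑ i ∈ range N, ∑ i' ∈ range N,
            Φ i i' * ∏ j ∈ w, ((b j : ℝ) * (if i % b j = i' % b j then 1 else 0) - 1) := by
      intro w hw
      unfold Fp
      refine Finset.sum_congr rfl fun i _ => Finset.sum_congr rfl fun i' _ => ?_
      exact Finset.prod_union (hdisj.mono_right (Finset.mem_powerset.1 hw))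
    rw [Finset.sum_congr rfl h1]
    calc ∑ w ∈ W.powerset, ∑ i ∈ range N, ∑ i' ∈ range N,
          Φ i i' * ∏ j ∈ w, ((b j : ℝ) * (if i % b j = i' % b j then 1 else 0) - 1)
        = ∑ i ∈ range N, ∑ w ∈ W.powerset, ∑ i' ∈ range N,
          Φ i i' * ∏ j ∈ w, ((b j : ℝ) * (if i % b j = i' % b j then 1 else 0) - 1) :=
          Finset.sum_comm
      _ = ∑ i ∈ range N, ∑ i' ∈ range N, ∑ w ∈ W.powerset,
          Φ i i' * ∏ j ∈ w, ((b j : ℝ) * (if i % b j = i' % b j then 1 else 0) - 1) :=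
          Finset.sum_congr rfl fun i _ => Finset.sum_comm
      _ = ∑ i ∈ range N, ∑ i' ∈ range N,
          Φ i i' * ((P : ℝ) * (if i % P = i' % P then 1 else 0)) := by
          refine Finset.sum_congr rfl fun i _ => Finset.sum_congr rfl fun i' _ => ?_
          rw [← Finset.mul_sum]
          congr 1
          have hpa := Finset.prod_add
            (fun j => (b j : ℝ) * (if i % b j = i' % b j then 1 else 0) - 1)
            (fun _ => (1:ℝ)) W
          simp only [Finset.prod_const_one, mul_one] at hpa
          have hlhs : ∏ j ∈ W, ((b j : ℝ) * (if i % b j = i' % b j then 1 else 0) - 1 + 1)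
              = ∏ j ∈ W, ((b j : ℝ) * (if i % b j = i' % b j then 1 else 0)) :=
            Finset.prod_congr rfl fun j _ => by ring
          rw [← hpa, hlhs, Finset.prod_mul_distrib, Finset.prod_boole]
          rw [if_congr (modeq_prod b W hcopW i i') rfl rfl]
          rw [← Nat.cast_prod]
  -- step 3: reindex and collapse
  rw [step12]
  rw [hN, sum_range_mul']
  have hinner : ∀ a, ∑ ρ ∈ range P, ∑ i' ∈ range (n * P),
        Φ (a * P + ρ) i' * ((P : ℝ) * (if (a * P + ρ) % P = i' % P then 1 else 0))
      = ∑ ρ ∈ range P, ∑ a' ∈ range n, (P : ℝ) * Φ (a * P + ρ) (a' * P + ρ) := by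
    intro a
    refine Finset.sum_congr rfl fun ρ hρ => ?_
    have hρP : ρ < P := mem_range.1 hρ
    rw [sum_range_mul']
    refine Finset.sum_congr rfl fun a' _ => ?_
    have hmod : ∀ c ρ'' : ℕ, ρ'' < P → (c * P + ρ'') % P = ρ'' := fun c ρ'' h => by
      rw [Nat.add_comm, Nat.add_mul_mod_self_right, Nat.mod_eq_of_lt h]
    calc ∑ ρ' ∈ range P,
          Φ (a * P + ρ) (a' * P + ρ') * ((P : ℝ) * (if (a * P + ρ) % P = (a' * P + ρ') % P then 1 else 0))
        = ∑ ρ' ∈ range P, (if ρ = ρ' then Φ (a * P + ρ) (a' * P + ρ') * (P : ℝ) else 0) := by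
          refine Finset.sum_congr rfl fun ρ' hρ' => ?_
          rw [hmod a ρ hρP, hmod a' ρ' (mem_range.1 hρ')]
          split_ifs <;> ring
      _ = (P : ℝ) * Φ (a * P + ρ) (a' * P + ρ) := by
          rw [Finset.sum_ite_eq (range P) ρ (fun ρ' => Φ (a * P + ρ) (a' * P + ρ') * (P : ℝ))]
          rw [if_pos hρ]
          ring
  rw [Finset.sum_congr rfl fun a _ => hinner a]
  -- step 4: translate mods and finish
  have hΦshift : ∀ a ρ a', Φ (a * P + ρ) (a' * P + ρ) = Φ a a' := by
    intro a ρ a'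
    exact Finset.prod_congr rfl fun j hj => by
      rw [if_congr (mod_shift (b j) P ρ a a' (hcopv j hj)) rfl rfl]
  calc ∑ a ∈ range n, ∑ ρ ∈ range P, ∑ a' ∈ range n, (P:ℝ) * Φ (a * P + ρ) (a' * P + ρ)
      = ∑ a ∈ range n, ∑ ρ ∈ range P, ∑ a' ∈ range n, (P:ℝ) * Φ a a' := by
        refine Finset.sum_congr rfl fun a _ => Finset.sum_congr rfl fun ρ _ =>
          Finset.sum_congr rfl fun a' _ => by rw [hΦshift]
    _ = ∑ a ∈ range n, (P:ℝ)^2 * ∑ a' ∈ range n, Φ a a' := by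
        refine Finset.sum_congr rfl fun a _ => ?_
        rw [Finset.sum_const, card_range, nsmul_eq_mul, ← Finset.mul_sum]
        ring
    _ = (∏ j ∈ W, (b j : ℝ))^2 * Fp b v n := by
        rw [← Finset.mul_sum]
        have hcast : ((P:ℕ):ℝ) = ∏ j ∈ W, (b j:ℝ) := by rw [hP]; push_cast; rfl
        rw [hcast]
        rfl

lemma neg_one_pow_sdiff (c d : ℕ) (h : d ≤ c) :
    (-1 : ℝ) ^ (c - d) = (-1 : ℝ) ^ c * (-1 : ℝ) ^ d := by
  have h1 : (-1 : ℝ) ^ (c - d) * (-1 : ℝ) ^ d = (-1 : ℝ) ^ c := by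
    rw [← pow_add, Nat.sub_add_cancel h]
  have h2 : ((-1 : ℝ) ^ d) * ((-1 : ℝ) ^ d) = 1 := by
    rcases Nat.even_or_odd d with he | ho
    · rw [he.neg_one_pow]; norm_num
    · rw [ho.neg_one_pow]; norm_num
  calc (-1 : ℝ) ^ (c - d) = (-1 : ℝ) ^ (c-d) * (((-1:ℝ)^d) * ((-1:ℝ)^d)) := by rw [h2, mul_one]
    _ = (-1 : ℝ) ^ c * (-1 : ℝ) ^ d := by rw [← mul_assoc, h1]

lemma sum_powerset_neg_one_real (u : Finset ℕ) (hu : u.Nonempty) :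
    ∑ t ∈ u.powerset, (-1 : ℝ) ^ (u \ t).card = 0 := by
  have h1 : ∀ t ∈ u.powerset, (-1 : ℝ) ^ (u \ t).card
      = (-1 : ℝ) ^ u.card * (-1 : ℝ) ^ t.card := by
    intro t ht
    rw [card_sdiff_of_subset (mem_powerset.1 ht)]
    exact neg_one_pow_sdiff _ _ (card_le_card (mem_powerset.1 ht))
  rw [Finset.sum_congr rfl h1, ← Finset.mul_sum]
  have h2 : ∑ t ∈ u.powerset, (-1 : ℝ) ^ t.card = 0 := by
    have := Finset.sum_powerset_neg_one_pow_card_of_nonempty hu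
    have h3 : ((∑ t ∈ u.powerset, (-1 : ℤ) ^ t.card : ℤ) : ℝ) = 0 := by rw [this]; norm_num
    push_cast at h3
    exact h3
  rw [h2, mul_zero]

lemma Gt_le (b : ℕ → ℕ) (u : Finset ℕ) (n : ℕ) (hu : u.Nonempty)
    (hb : ∀ j ∈ u, 2 ≤ b j) :
    Gt b (fun _ => 0) u n ≤ (n : ℝ) * ∏ j ∈ u, ((b j : ℝ) + 1) := by
  have hm : ∀ t ∈ u.powerset, 0 < ∏ j ∈ t, b j := by
    intro t ht
    exact Finset.prod_pos fun j hj => by have := hb j (mem_powerset.1 ht hj); omega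
  have key : ∀ t ∈ u.powerset,
      (∏ j ∈ t, (b j : ℝ)) * (-1) ^ (u \ t).card * (Cpairs (mProd b (fun _ => 0) u t) n : ℝ)
      = (-1:ℝ) ^ (u \ t).card * (n:ℝ)^2
        + (-1:ℝ) ^ (u \ t).card * ((∏ j ∈ t, (b j:ℝ)) * (Cpairs (∏ j ∈ t, b j) n : ℝ) - (n:ℝ)^2) := by
    intro t ht
    rw [mProd_zero]
    ring
  unfold Gt
  rw [Finset.sum_congr rfl key, Finset.sum_add_distrib]
  have hz : ∑ t ∈ u.powerset, (-1:ℝ) ^ (u \ t).card * (n:ℝ)^2 = 0 := by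
    rw [← Finset.sum_mul, sum_powerset_neg_one_real u hu, zero_mul]
  rw [hz, zero_add]
  have hbound : ∀ t ∈ u.powerset,
      (-1:ℝ) ^ (u \ t).card * ((∏ j ∈ t, (b j:ℝ)) * (Cpairs (∏ j ∈ t, b j) n : ℝ) - (n:ℝ)^2)
      ≤ (∏ j ∈ t, (b j:ℝ)) * n := by
    intro t ht
    have hmt := hm t ht
    have hcast : (∏ j ∈ t, (b j:ℝ)) = ((∏ j ∈ t, b j : ℕ) : ℝ) := by push_cast; rfl
    have hlow : (n:ℝ)^2 ≤ (∏ j ∈ t, (b j:ℝ)) * (Cpairs (∏ j ∈ t, b j) n : ℝ) := by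
      rw [hcast, ← Nat.cast_mul]
      exact_mod_cast cpairs_lower _ n hmt
    have hup : (∏ j ∈ t, (b j:ℝ)) * (Cpairs (∏ j ∈ t, b j) n : ℝ)
        ≤ (n:ℝ)^2 + (∏ j ∈ t, (b j:ℝ)) * n := by
      rw [hcast, ← Nat.cast_mul]
      have := cpairs_upper (∏ j ∈ t, b j) n hmt
      calc ((((∏ j ∈ t, b j) * Cpairs (∏ j ∈ t, b j) n : ℕ)) : ℝ)
          ≤ ((n^2 + (∏ j ∈ t, b j) * n : ℕ) : ℝ) := by exact_mod_cast this
        _ = (n:ℝ)^2 + ((∏ j ∈ t, b j : ℕ):ℝ) * n := by push_cast; ring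
    rcases Nat.even_or_odd (u \ t).card with he | ho
    · rw [he.neg_one_pow, one_mul]
      linarith
    · rw [ho.neg_one_pow]
      have h0 : (0:ℝ) ≤ (∏ j ∈ t, (b j:ℝ)) * n := by positivity
      nlinarith
  calc ∑ t ∈ u.powerset, (-1:ℝ) ^ (u \ t).card *
        ((∏ j ∈ t, (b j:ℝ)) * (Cpairs (∏ j ∈ t, b j) n : ℝ) - (n:ℝ)^2)
      ≤ ∑ t ∈ u.powerset, (∏ j ∈ t, (b j:ℝ)) * n := Finset.sum_le_sum hbound
    _ = (∑ t ∈ u.powerset, ∏ j ∈ t, (b j:ℝ)) * n := by rw [Finset.sum_mul]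
    _ = (∏ j ∈ u, ((b j:ℝ) + 1)) * n := by
        have := Finset.prod_add (fun j => (b j:ℝ)) (fun _ => (1:ℝ)) u
        simp only [Finset.prod_const_one, mul_one] at this
        rw [← this]
    _ = (n : ℝ) * ∏ j ∈ u, ((b j : ℝ) + 1) := mul_comm _ _

lemma Gn_le (b : ℕ → ℕ) (u : Finset ℕ) (n : ℕ) (hu : u.Nonempty)
    (hb : ∀ j ∈ u, 2 ≤ b j) (hn : 1 ≤ n) :
    Gn b (fun _ => 0) u n
      ≤ (∏ j ∈ u, ((b j : ℝ) + 1)) / (∏ j ∈ u, ((b j : ℝ) - 1)) := by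
  have hD : 0 < ∏ j ∈ u, ((b j : ℝ) - 1) := by
    apply Finset.prod_pos
    intro j hj
    have := hb j hj
    have : (2:ℝ) ≤ (b j : ℝ) := by exact_mod_cast this
    linarith
  have hn0 : (0:ℝ) < n := by exact_mod_cast hn
  unfold Gn
  rw [div_le_div_iff₀ (by positivity) hD]
  have h1 := Gt_le b u n hu hb
  calc Gt b (fun _ => 0) u n * ∏ j ∈ u, ((b j:ℝ) - 1)
      ≤ ((n:ℝ) * ∏ j ∈ u, ((b j:ℝ) + 1)) * ∏ j ∈ u, ((b j:ℝ) - 1) := by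
        exact mul_le_mul_of_nonneg_right h1 hD.le
    _ = (∏ j ∈ u, ((b j:ℝ) + 1)) * ((n:ℝ) * ∏ j ∈ u, ((b j:ℝ) - 1)) := by ring

theorem stmt15 (u v : Finset ℕ) (hv : v.Nonempty) (hvu : v ⊆ u) (b : ℕ → ℕ)
    (hb : ∀ j ∈ u, 2 ≤ b j)
    (hcop : ∀ i ∈ u, ∀ j ∈ u, i ≠ j → Nat.Coprime (b i) (b j)) :
    sSup {x : ℝ | ∃ n : ℕ, 1 ≤ n ∧ x = Gn b (fun _ => 0) v n} ≤
      sSup {x : ℝ | ∃ n : ℕ, 1 ≤ n ∧ x = Gn b (fun _ => 0) u n} := by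
  classical
  set S : Finset ℕ → Set ℝ :=
    fun w => {x : ℝ | ∃ n : ℕ, 1 ≤ n ∧ x = Gn b (fun _ => 0) w n} with hS
  -- basic facts about the sets S w for nonempty w ⊆ u
  have hSne : ∀ w : Finset ℕ, (S w).Nonempty :=
    fun w => ⟨Gn b (fun _ => 0) w 1, 1, le_refl 1, rfl⟩
  have hbdd : ∀ w : Finset ℕ, w.Nonempty → w ⊆ u → BddAbove (S w) := by
    intro w hw hwu
    refine ⟨(∏ j ∈ w, ((b j : ℝ) + 1)) / (∏ j ∈ w, ((b j : ℝ) - 1)), ?_⟩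
    rintro x ⟨n, hn, rfl⟩
    exact Gn_le b w n hw (fun j hj => hb j (hwu hj)) hn
  have hmem : ∀ w : Finset ℕ, w.Nonempty → w ⊆ u → ∀ n : ℕ, 1 ≤ n →
      Gn b (fun _ => 0) w n ≤ sSup (S w) := by
    intro w hw hwu n hn
    exact le_csSup (hbdd w hw hwu) ⟨n, hn, rfl⟩
  -- the D and positivity facts
  have hDpos : ∀ w : Finset ℕ, w ⊆ u → (0:ℝ) < ∏ j ∈ w, ((b j : ℝ) - 1) := by
    intro w hwu
    apply Finset.prod_pos
    intro j hj
    have h2 : (2:ℝ) ≤ (b j : ℝ) := by exact_mod_cast hb j (hwu hj)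
    linarith
  have hFp_eq : ∀ w : Finset ℕ, w ⊆ u → ∀ N : ℕ, 1 ≤ N →
      Fp b w N = Gn b (fun _ => 0) w N * ((N : ℝ) * ∏ j ∈ w, ((b j : ℝ) - 1)) := by
    intro w hwu N hN
    have hcopw : ∀ i ∈ w, ∀ j ∈ w, i ≠ j → Nat.Coprime (b i) (b j) :=
      fun i hi j hj hij => hcop i (hwu hi) j (hwu hj) hij
    rw [← Gt_eq_Fp b w N hcopw, Gn]
    rw [div_mul_cancel₀]
    have hN0 : (0:ℝ) < N := by exact_mod_cast hN
    have := hDpos w hwu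
    positivity
  -- main induction
  have main : ∀ k : ℕ, ∀ v' : Finset ℕ, v'.Nonempty → v' ⊆ u → (u \ v').card ≤ k →
      sSup (S v') ≤ sSup (S u) := by
    intro k
    induction k with
    | zero =>
      intro v' hv' hvu' hcard
      have h1 : u \ v' = ∅ := card_eq_zero.1 (Nat.le_zero.1 hcard)
      have h2 : v' = u := Finset.Subset.antisymm hvu' (Finset.sdiff_eq_empty_iff_subset.1 h1)
      rw [h2]
    | succ k ih =>
      intro v' hv' hvu' hcard
      by_cases hWe : u \ v' = ∅
      · have h2 : v' = u := Finset.Subset.antisymm hvu' (Finset.sdiff_eq_empty_iff_subset.1 hWe)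
        rw [h2]
      · -- the interesting case
        set W := u \ v' with hW
        have hWne : W.Nonempty := Finset.nonempty_iff_ne_empty.2 hWe
        have hWu : W ⊆ u := Finset.sdiff_subset
        have hdisj : Disjoint v' W := Finset.disjoint_sdiff
        set P : ℕ := ∏ l ∈ W, b l with hP
        have hP1 : 1 < P := by
          obtain ⟨j, hj⟩ := hWne
          have h1 : 2 ≤ b j := hb j (hWu hj)
          have h2 : b j ≤ ∏ l ∈ W, b l :=
            Finset.single_le_prod' (fun i hi => le_trans one_le_two (hb i (hWu hi)) |>.trans' (by omega)) hj
          have h3 : b j ≤ P := h2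
          omega
        have hPR : (1:ℝ) < (P:ℝ) := by exact_mod_cast hP1
        set Γv := sSup (S v') with hΓv
        set Γu := sSup (S u) with hΓu
        -- IH for all nonempty w ⊆ W
        have hIH : ∀ w : Finset ℕ, w ⊆ W → w.Nonempty → sSup (S (v' ∪ w)) ≤ Γu := by
          intro w hwW hwne
          have hsub : v' ∪ w ⊆ u := Finset.union_subset hvu' (hwW.trans hWu)
          have hne : (v' ∪ w).Nonempty := hv'.mono Finset.subset_union_left
          have hsd : u \ (v' ∪ w) = W \ w := by
            ext x; simp only [hW, mem_sdiff, mem_union]; tauto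
          have hcards : (u \ (v' ∪ w)).card ≤ k := by
            rw [hsd, card_sdiff_of_subset hwW]
            have h1 : 1 ≤ w.card := Finset.card_pos.2 hwne
            have h2 : W.card ≤ k + 1 := hcard
            omega
          exact ih (v' ∪ w) hne hsub hcards
        -- key inequality for each n ≥ 1
        have hkey : ∀ n : ℕ, 1 ≤ n → (P:ℝ) * Gn b (fun _ => 0) v' n ≤ Γv + Γu * ((P:ℝ) - 1) := by
          intro n hn
          have hbW : ∀ j ∈ W, 1 ≤ b j := fun j hj => le_trans one_le_two (hb j (hWu hj))
          have hcopW : ∀ i ∈ W, ∀ j ∈ W, i ≠ j → Nat.Coprime (b i) (b j) :=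
            fun i hi j hj hij => hcop i (hWu hi) j (hWu hj) hij
          have hcopv : ∀ j ∈ v', Nat.gcd (b j) P = 1 := by
            intro j hj
            apply Nat.Coprime.prod_right
            intro l hl
            exact hcop j (hvu' hj) l (hWu hl) (fun h => (Finset.disjoint_left.1 hdisj hj) (h ▸ hl))
          have hscal := scaling b v' W hdisj hbW hcopW hcopv n
          have hNP : 1 ≤ n * P := Nat.one_le_iff_ne_zero.2 (by positivity)
          have hNPR : (0:ℝ) < (n:ℝ) * (P:ℝ) := by
            have : (0:ℝ) < (n:ℝ) := by exact_mod_cast hn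
            have : (0:ℝ) < (P:ℝ) := by linarith [hPR]
            positivity
          set Dv := ∏ j ∈ v', ((b j : ℝ) - 1) with hDv
          have hDvpos : 0 < Dv := hDpos v' hvu'
          -- bound each term of the powerset sum
          have hterm : ∀ w ∈ W.powerset,
              Fp b (v' ∪ w) (n * P) ≤ (if w = ∅ then Γv else Γu) *
                (((n * P : ℕ) : ℝ) * (Dv * ∏ j ∈ w, ((b j : ℝ) - 1))) := by
            intro w hw
            have hwW := Finset.mem_powerset.1 hw
            have hsub : v' ∪ w ⊆ u := Finset.union_subset hvu' (hwW.trans hWu)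
            have hne : (v' ∪ w).Nonempty := hv'.mono Finset.subset_union_left
            have hDw : ∏ j ∈ v' ∪ w, ((b j : ℝ) - 1) = Dv * ∏ j ∈ w, ((b j : ℝ) - 1) :=
              Finset.prod_union (hdisj.mono_right hwW)
            rw [hFp_eq (v' ∪ w) hsub (n * P) hNP, hDw]
            have hpos : (0:ℝ) < ((n * P : ℕ) : ℝ) * (Dv * ∏ j ∈ w, ((b j : ℝ) - 1)) := by
              have h1 : (0:ℝ) < ((n * P : ℕ) : ℝ) := by exact_mod_cast hNP
              have h2 := hDpos (v' ∪ w) hsub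
              rw [hDw] at h2
              positivity
            apply mul_le_mul_of_nonneg_right _ hpos.le
            by_cases hwe : w = ∅
            · subst hwe
              rw [if_pos rfl, Finset.union_empty]
              exact hmem v' hv' hvu' (n * P) hNP
            · rw [if_neg hwe]
              have hwne : w.Nonempty := Finset.nonempty_iff_ne_empty.2 hwe
              calc Gn b (fun _ => 0) (v' ∪ w) (n * P) ≤ sSup (S (v' ∪ w)) :=
                    hmem (v' ∪ w) hne hsub (n * P) hNP
                _ ≤ Γu := hIH w hwW hwne
          -- sum the bounds
          have hsum := Finset.sum_le_sum hterm
          rw [hscal] at hsum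
          -- compute the RHS sum
          have hsplit : ∑ w ∈ W.powerset, (if w = ∅ then Γv else Γu) *
                (((n * P : ℕ) : ℝ) * (Dv * ∏ j ∈ w, ((b j : ℝ) - 1)))
              = ((n * P : ℕ) : ℝ) * Dv * (Γv + Γu * ((P:ℝ) - 1)) := by
            have hemem : (∅ : Finset ℕ) ∈ W.powerset := Finset.empty_mem_powerset W
            rw [← Finset.add_sum_erase _ (fun w => (if w = ∅ then Γv else Γu) *
                (((n * P : ℕ) : ℝ) * (Dv * ∏ j ∈ w, ((b j : ℝ) - 1)))) hemem]
            have hEmptyT : (if (∅:Finset ℕ) = ∅ then Γv else Γu) *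
                (((n * P : ℕ) : ℝ) * (Dv * ∏ j ∈ (∅:Finset ℕ), ((b j : ℝ) - 1)))
                = Γv * (((n * P : ℕ) : ℝ) * Dv) := by
              simp
            rw [hEmptyT]
            have hrest : ∑ w ∈ (W.powerset).erase ∅, (if w = ∅ then Γv else Γu) *
                (((n * P : ℕ) : ℝ) * (Dv * ∏ j ∈ w, ((b j : ℝ) - 1)))
                = Γu * (((n * P : ℕ) : ℝ) * Dv) * ((P:ℝ) - 1) := by
              have h1 : ∀ w ∈ (W.powerset).erase ∅, (if w = ∅ then Γv else Γu) *
                  (((n * P : ℕ) : ℝ) * (Dv * ∏ j ∈ w, ((b j : ℝ) - 1)))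
                  = Γu * (((n * P : ℕ) : ℝ) * Dv) * ∏ j ∈ w, ((b j : ℝ) - 1) := by
                intro w hw
                rw [if_neg (Finset.ne_of_mem_erase hw)]
                ring
              rw [Finset.sum_congr rfl h1, ← Finset.mul_sum]
              congr 1
              -- ∑ over erase ∅ of ∏ (b-1) = P - 1
              have h2 : ∑ w ∈ W.powerset, ∏ j ∈ w, ((b j : ℝ) - 1) = (P:ℝ) := by
                have := Finset.prod_add (fun j => (b j:ℝ) - 1) (fun _ => (1:ℝ)) W
                simp only [Finset.prod_const_one, mul_one] at this
                have h3 : ∏ j ∈ W, ((b j:ℝ) - 1 + 1) = ∏ j ∈ W, (b j:ℝ) :=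
                  Finset.prod_congr rfl fun j _ => by ring
                rw [← this, h3, hP]
                push_cast
                rfl
              rw [← Finset.add_sum_erase _ (fun w => ∏ j ∈ w, ((b j : ℝ) - 1)) hemem] at h2
              simp only [Finset.prod_empty] at h2
              linarith
            rw [hrest]
            ring
          rw [hsplit] at hsum
          -- now divide
          have hFpv := hFp_eq v' hvu' n hn
          rw [hFpv] at hsum
          have hcast : ((n * P : ℕ) : ℝ) = (n:ℝ) * (P:ℝ) := by push_cast; ring
          rw [hcast] at hsum
          have hnR : (0:ℝ) < (n:ℝ) := by exact_mod_cast hn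
          have hPRpos : (0:ℝ) < (P:ℝ) := by linarith
          have hprodcast : ∏ j ∈ W, (b j:ℝ) = (P:ℝ) := by rw [hP]; push_cast; rfl
          rw [hprodcast] at hsum
          have hpos3 : (0:ℝ) < (n:ℝ) * (P:ℝ) * Dv := by positivity
          rw [← mul_le_mul_iff_of_pos_right hpos3]
          calc (P:ℝ) * Gn b (fun _ => 0) v' n * ((n:ℝ) * (P:ℝ) * Dv)
              = (P:ℝ)^2 * (Gn b (fun _ => 0) v' n * ((n:ℝ) * Dv)) := by ring
            _ ≤ (n:ℝ) * (P:ℝ) * Dv * (Γv + Γu * ((P:ℝ) - 1)) := hsum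
            _ = (Γv + Γu * ((P:ℝ) - 1)) * ((n:ℝ) * (P:ℝ) * Dv) := by ring
        -- conclude : Γv ≤ Γu
        have hsup : Γv ≤ (Γv + Γu * ((P:ℝ) - 1)) / (P:ℝ) := by
          apply csSup_le (hSne v')
          rintro x ⟨n, hn, rfl⟩
          rw [le_div_iff₀ (by linarith)]
          have := hkey n hn
          linarith [hkey n hn]
        have hPpos : (0:ℝ) < (P:ℝ) := by linarith
        rw [le_div_iff₀ hPpos] at hsup
        nlinarith [hsup, hPR]
  exact main (u \ v).card v hv hvu (le_refl _)
end

section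
/- Let u ⊆ {1,…,d} be nonempty with b_j the j-th prime, and suppose 1 ∈ u or 2 ∈ u (i.e., the base 2 or 3 is used). Fix j* ∈ u with b_{j*} ∈ {2,3} and set n* = ∏_{j∈u, j≠j*} b_j. Then G_{u,0}(n*) = ∏_{j∈u, j≠j*} (b_j + 1)/b_j, and hence sup_{n≥1} G_{u,0}(n) ≥ ∏_{j∈u, j≠j*} (b_j + 1)/b_j. -/
lemma filter_mod_card (m n : ℕ) (hm : 0 < m) :
    ((Finset.range n).filter (fun j => j % m = n % m)).card = n / m := by
  have himg : (Finset.range n).filter (fun j => j % m = n % m)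
      = (Finset.range (n / m)).image (fun t => n % m + t * m) := by
    ext j
    simp only [Finset.mem_filter, Finset.mem_range, Finset.mem_image]
    constructor
    · rintro ⟨hj, hmod⟩
      refine ⟨j / m, ?_, ?_⟩
      · have h1 := Nat.div_add_mod j m
        have h2 := Nat.div_add_mod n m
        have : m * (j / m) < m * (n / m) := by omega
        exact Nat.lt_of_mul_lt_mul_left this
      · have h1 := Nat.div_add_mod' j m
        omega
    · rintro ⟨t, ht, rfl⟩
      have h2 := Nat.div_add_mod' n m
      have hmul : t * m + 1 * m ≤ (n / m) * m := by
        rw [← add_mul]; exact Nat.mul_le_mul_right m (by omega)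
      constructor
      · have := Nat.mod_lt n hm
        linarith
      · rw [Nat.add_mul_mod_self_right]
        exact Nat.mod_mod_of_dvd n (dvd_refl m)
  rw [himg, Finset.card_image_of_injective _ (fun a c h => by
      have h' := Nat.add_left_cancel h
      exact Nat.eq_of_mul_eq_mul_right hm h'), Finset.card_range]

lemma cpairs_eq_sum_s18 (m n : ℕ) :
    Cpairs m n = ∑ i ∈ Finset.range n, ((Finset.range n).filter fun j => j % m = i % m).card := by
  unfold Cpairs
  rw [Finset.card_filter, Finset.sum_product]
  refine Finset.sum_congr rfl fun i _ => ?_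
  rw [Finset.card_filter]
  exact Finset.sum_congr rfl fun j _ => by simp [eq_comm]

lemma cpairs_succ (m n : ℕ) (hm : 0 < m) :
    Cpairs m (n + 1) = Cpairs m n + 2 * (n / m) + 1 := by
  have hA : ∀ i, ((Finset.range (n+1)).filter fun j => j % m = i % m).card
      = ((Finset.range n).filter fun j => j % m = i % m).card
        + (if n % m = i % m then 1 else 0) := by
    intro i
    rw [Finset.range_add_one, Finset.filter_insert]
    split <;> simp [Finset.card_insert_of_notMem, Finset.notMem_range_self]
  have h1 : ((Finset.range n).filter fun j => j % m = n % m).card = n / m :=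
    filter_mod_card m n hm
  rw [cpairs_eq_sum_s18, cpairs_eq_sum_s18, Finset.sum_range_succ]
  have h2 : (∑ i ∈ Finset.range n, ((Finset.range (n+1)).filter fun j => j % m = i % m).card)
      = (∑ i ∈ Finset.range n, ((Finset.range n).filter fun j => j % m = i % m).card)
        + ∑ i ∈ Finset.range n, (if n % m = i % m then 1 else 0) := by
    rw [← Finset.sum_add_distrib]
    exact Finset.sum_congr rfl fun i _ => hA i
  have h3 : (∑ i ∈ Finset.range n, (if n % m = i % m then 1 else 0))
      = ((Finset.range n).filter fun j => j % m = n % m).card := by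
    rw [Finset.card_filter]
    exact (Finset.sum_congr rfl fun i _ => by simp [eq_comm]).symm
  rw [h2, h3, h1, hA n, h1]
  simp
  omega

lemma cpairs_key (m n : ℕ) (hm : 0 < m) :
    m * Cpairs m n = n ^ 2 + (n % m) * (m - n % m) := by
  induction n with
  | zero => simp [Cpairs]
  | succ n ih =>
    rw [cpairs_succ m n hm, Nat.mul_add, Nat.mul_add, ih]
    have h2 := Nat.div_add_mod n m
    have hs : n % m < m := Nat.mod_lt n hm
    have h7 : m * (2 * (n / m)) = 2 * (m * (n / m)) := by ring
    have e2 : n ^ 2 = n * n := sq n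
    have e3 : (n+1)^2 = n*n + 2*n + 1 := by ring
    rcases Nat.lt_or_ge (n % m + 1) m with hc | hc
    · have hs' : (n + 1) % m = n % m + 1 := by
        conv_lhs => rw [← h2]
        rw [Nat.add_assoc, Nat.mul_add_mod]
        exact Nat.mod_eq_of_lt hc
      rw [hs']
      have e1 : m - n % m = (m - (n % m + 1)) + 1 := by omega
      rw [e1, e2, e3]
      have h4 : n % m * (m - (n%m+1) + 1) = n%m * (m - (n%m+1)) + n%m := by ring
      have h5 : (n%m+1) * (m - (n%m+1)) = n%m * (m-(n%m+1)) + (m - (n%m+1)) := by ring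
      have h6 : m - (n%m+1) + (n%m+1) = m := by omega
      linarith
    · have hcm : n % m + 1 = m := by omega
      have hs' : (n + 1) % m = 0 := by
        conv_lhs => rw [← h2]
        rw [Nat.add_assoc, Nat.mul_add_mod, hcm, Nat.mod_self]
      rw [hs', e2, e3]
      have : m - n % m = 1 := by omega
      rw [this]
      linarith

lemma sign_sum_zero (u : Finset ℕ) (hu : u.Nonempty) :
    ∑ v ∈ u.powerset, (-1 : ℝ) ^ (u \ v).card = 0 := by
  have h0 := Finset.prod_add (fun _ : ℕ => (1 : ℝ)) (fun _ => (-1 : ℝ)) u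
  simp only [Finset.prod_const_one, one_mul, Finset.prod_const] at h0
  rw [← h0]
  rw [show (1 : ℝ) + -1 = 0 by ring]
  exact zero_pow (Finset.card_ne_zero.mpr hu)

lemma sq_sum (b : ℕ → ℕ) (w : Finset ℕ) :
    ∑ v ∈ w.powerset, (-1 : ℝ) ^ (w \ v).card * (∏ j ∈ v, (b j : ℝ)) ^ 2
      = ∏ j ∈ w, ((b j : ℝ) ^ 2 - 1) := by
  have h0 := Finset.prod_add (fun j => (b j : ℝ) ^ 2) (fun _ => (-1 : ℝ)) w
  have h1 : ∏ j ∈ w, ((b j : ℝ) ^ 2 - 1) = ∏ j ∈ w, ((b j : ℝ) ^ 2 + (-1)) :=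
    Finset.prod_congr rfl fun j _ => by ring
  rw [h1, h0]
  refine Finset.sum_congr rfl fun v hv => ?_
  rw [Finset.prod_const, Finset.prod_pow]
  ring

lemma Gt_eq (b : ℕ → ℕ) (u : Finset ℕ) (hu : u.Nonempty) (hb : ∀ j ∈ u, 0 < b j) (n : ℕ) :
    Gt b (fun _ => 0) u n
      = ∑ v ∈ u.powerset, (-1 : ℝ) ^ (u \ v).card *
          (((n % ∏ j ∈ v, b j) * ((∏ j ∈ v, b j) - n % ∏ j ∈ v, b j) : ℕ) : ℝ) := by
  unfold Gt
  have step : ∀ v ∈ u.powerset,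
      (∏ j ∈ v, (b j : ℝ)) * (-1) ^ (u \ v).card * (Cpairs (mProd b (fun _ => 0) u v) n : ℝ)
      = (-1 : ℝ) ^ (u \ v).card * ((n ^ 2 : ℕ) : ℝ)
        + (-1 : ℝ) ^ (u \ v).card *
          (((n % ∏ j ∈ v, b j) * ((∏ j ∈ v, b j) - n % ∏ j ∈ v, b j) : ℕ) : ℝ) := by
    intro v hv
    have hvpos : 0 < ∏ j ∈ v, b j :=
      Finset.prod_pos fun j hj => hb j (Finset.mem_powerset.mp hv hj)
    have hM0 : mProd b (fun _ => 0) u v = ∏ j ∈ v, b j := by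
      simp [mProd]
    have hcast : ((∏ j ∈ v, b j : ℕ) : ℝ) * (Cpairs (∏ j ∈ v, b j) n : ℝ)
        = (((n ^ 2 : ℕ) : ℝ))
          + (((n % ∏ j ∈ v, b j) * ((∏ j ∈ v, b j) - n % ∏ j ∈ v, b j) : ℕ) : ℝ) := by
      rw [← Nat.cast_mul, cpairs_key _ n hvpos, Nat.cast_add]
    have h1 : (∏ j ∈ v, (b j : ℝ)) = ((∏ j ∈ v, b j : ℕ) : ℝ) := by push_cast; rfl
    rw [hM0, h1, mul_comm _ ((-1:ℝ) ^ (u \ v).card), mul_assoc, hcast]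
    ring
  rw [Finset.sum_congr rfl step, Finset.sum_add_distrib, ← Finset.sum_mul,
    sign_sum_zero u hu, zero_mul, zero_add]

theorem stmt18 (d : ℕ) (u : Finset ℕ) (hu : u.Nonempty)
    (hud : u ⊆ Finset.Icc 1 d)
    (b : ℕ → ℕ) (hbp : ∀ j, 1 ≤ j → b j = Nat.nth Nat.Prime (j - 1))
    (jstar : ℕ) (hjstar : jstar ∈ u) (hj23 : b jstar = 2 ∨ b jstar = 3)
    (nstar : ℕ) (hnstar : nstar = ∏ j ∈ u.erase jstar, b j) :
    Gn b (fun _ => 0) u nstar = ∏ j ∈ u.erase jstar, ((b j : ℝ) + 1) / (b j : ℝ) ∧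
      (∏ j ∈ u.erase jstar, ((b j : ℝ) + 1) / (b j : ℝ)) ≤
        sSup {x : ℝ | ∃ n : ℕ, 1 ≤ n ∧ x = Gn b (fun _ => 0) u n} := by
  have hprime : ∀ j ∈ u, Nat.Prime (b j) := by
    intro j hj
    have hj1 : 1 ≤ j := (Finset.mem_Icc.mp (hud hj)).1
    rw [hbp j hj1]
    exact Nat.prime_nth_prime _
  have hb1 : ∀ j ∈ u, 0 < b j := fun j hj => (hprime j hj).pos
  set w := u.erase jstar with hwdef
  have hjw : jstar ∉ w := Finset.notMem_erase _ _
  have hwu : w ⊆ u := Finset.erase_subset _ _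
  have huw : u = insert jstar w := (Finset.insert_erase hjstar).symm
  have hbj : 2 ≤ b jstar := (hprime jstar hjstar).two_le
  have hdist : ∀ j ∈ w, b j ≠ b jstar := by
    intro j hj hbeq
    have hju : j ∈ u := hwu hj
    have hj1 : 1 ≤ j := (Finset.mem_Icc.mp (hud hju)).1
    have hjs1 : 1 ≤ jstar := (Finset.mem_Icc.mp (hud hjstar)).1
    rw [hbp j hj1, hbp jstar hjs1] at hbeq
    have h := Nat.nth_injective Nat.infinite_setOf_prime hbeq
    have : j = jstar := by omega
    exact (Finset.ne_of_mem_erase hj) this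
  have hnpos : 0 < nstar := by
    rw [hnstar]; exact Finset.prod_pos fun j hj => hb1 j (hwu hj)
  -- evaluation of the residual term at `nstar` for subsets containing jstar
  have heval : ∀ v ∈ w.powerset,
      (nstar % (∏ j ∈ insert jstar v, b j)) *
        ((∏ j ∈ insert jstar v, b j) - nstar % (∏ j ∈ insert jstar v, b j))
      = (b jstar - 1) * (∏ j ∈ v, b j) ^ 2 := by
    intro v hv
    rw [Finset.mem_powerset] at hv
    have hjv : jstar ∉ v := fun h => hjw (hv h)
    have hgq : (∏ j ∈ v, b j) * (∏ j ∈ w \ v, b j) = nstar := by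
      rw [hnstar, mul_comm, Finset.prod_sdiff hv]
    have hMins : ∏ j ∈ insert jstar v, b j = b jstar * ∏ j ∈ v, b j :=
      Finset.prod_insert hjv
    have hcop : Nat.Coprime (b jstar) (∏ j ∈ w \ v, b j) := by
      apply Nat.Coprime.prod_right
      intro j hj
      have hjw' : j ∈ w := (Finset.mem_sdiff.mp hj).1
      exact (Nat.coprime_primes (hprime jstar hjstar) (hprime j (hwu hjw'))).mpr
        fun h => hdist j hjw' h.symm
    set g := ∏ j ∈ v, b j with hg
    set q := ∏ j ∈ w \ v, b j with hq
    set r := q % b jstar with hr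
    have hmod : nstar % (b jstar * g) = g * r := by
      rw [← hgq, mul_comm (b jstar) g, Nat.mul_mod_mul_left]
    have hr0 : r ≠ 0 := by
      intro h0
      have hdvd : b jstar ∣ q := Nat.dvd_of_mod_eq_zero h0
      have := (Nat.Prime.coprime_iff_not_dvd (hprime jstar hjstar)).mp hcop
      exact this hdvd
    have hrb : r < b jstar := Nat.mod_lt _ (by omega)
    have hrval : r * (b jstar - r) = b jstar - 1 := by
      rcases hj23 with h | h <;> rw [h] at hrb ⊢ <;> interval_cases r <;> omega
    rw [hMins, hmod]
    have hsub : b jstar * g - g * r = g * (b jstar - r) := by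
      rw [Nat.mul_sub_left_distrib, mul_comm g (b jstar)]
    rw [hsub]
    calc (g * r) * (g * (b jstar - r)) = (r * (b jstar - r)) * g ^ 2 := by ring
      _ = (b jstar - 1) * g ^ 2 := by rw [hrval]
  -- Gt at nstar
  have hGtval : Gt b (fun _ => 0) u nstar
      = ((b jstar : ℝ) - 1) * ∏ j ∈ w, ((b j : ℝ) ^ 2 - 1) := by
    rw [Gt_eq b u hu hb1 nstar, huw, Finset.sum_powerset_insert hjw]
    have hzero : ∀ v ∈ w.powerset,
        (-1 : ℝ) ^ (insert jstar w \ v).card *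
          (((nstar % ∏ j ∈ v, b j) * ((∏ j ∈ v, b j) - nstar % ∏ j ∈ v, b j) : ℕ) : ℝ) = 0 := by
      intro v hv
      rw [Finset.mem_powerset] at hv
      have hMpos : 0 < ∏ j ∈ v, b j :=
        Finset.prod_pos fun j hj => hb1 j (hwu (hv hj))
      have hdvd : (∏ j ∈ v, b j) ∣ nstar :=
        hnstar ▸ Finset.prod_dvd_prod_of_subset v w b hv
      rw [Nat.mod_eq_zero_of_dvd hdvd]
      simp
    rw [Finset.sum_eq_zero hzero, zero_add]
    have hsd : ∀ v ∈ w.powerset, insert jstar w \ insert jstar v = w \ v := by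
      intro v hv
      rw [Finset.mem_powerset] at hv
      ext x
      simp only [Finset.mem_sdiff, Finset.mem_insert, not_or]
      constructor
      · rintro ⟨hxu, hx1, hx2⟩
        rcases hxu with rfl | hxw
        · exact absurd rfl hx1
        · exact ⟨hxw, hx2⟩
      · rintro ⟨hxw, hx2⟩
        exact ⟨Or.inr hxw, fun h => hjw (h ▸ hxw), hx2⟩
    have hterm : ∀ v ∈ w.powerset,
        (-1:ℝ) ^ (insert jstar w \ insert jstar v).card *
          (((nstar % ∏ j ∈ insert jstar v, b j) *
            ((∏ j ∈ insert jstar v, b j) - nstar % ∏ j ∈ insert jstar v, b j) : ℕ) : ℝ)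
        = ((b jstar : ℝ) - 1) *
            ((-1:ℝ) ^ (w \ v).card * (∏ j ∈ v, (b j : ℝ)) ^ 2) := by
      intro v hv
      rw [hsd v hv, heval v hv]
      rw [Nat.cast_mul, Nat.cast_pow, Nat.cast_sub (by omega : 1 ≤ b jstar), Nat.cast_one,
        Nat.cast_prod]
      ring
    rw [Finset.sum_congr rfl hterm, ← Finset.mul_sum, sq_sum]
  -- nonvanishing facts
  have hb2R : ∀ j ∈ w, (2:ℝ) ≤ (b j : ℝ) := fun j hj => by
    exact_mod_cast (hprime j (hwu hj)).two_le
  have hBne : ((b jstar : ℝ) - 1) ≠ 0 := by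
    have : (2:ℝ) ≤ (b jstar : ℝ) := by exact_mod_cast hbj
    linarith
  have hprodb_ne : (∏ j ∈ w, (b j : ℝ)) ≠ 0 :=
    Finset.prod_ne_zero_iff.mpr fun j hj => by have := hb2R j hj; linarith
  have hprodm1_ne : (∏ j ∈ w, ((b j : ℝ) - 1)) ≠ 0 :=
    Finset.prod_ne_zero_iff.mpr fun j hj => by have := hb2R j hj; linarith
  have hcastn : (nstar : ℝ) = ∏ j ∈ w, (b j : ℝ) := by
    rw [hnstar]; push_cast; rfl
  have hsq : ∏ j ∈ w, ((b j : ℝ)^2 - 1) = (∏ j ∈ w, ((b j:ℝ)+1)) * ∏ j ∈ w, ((b j:ℝ)-1) := by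
    rw [← Finset.prod_mul_distrib]
    exact Finset.prod_congr rfl fun j _ => by ring
  have hpart1 : Gn b (fun _ => 0) u nstar = ∏ j ∈ w, ((b j : ℝ) + 1) / (b j : ℝ) := by
    unfold Gn
    rw [hGtval, hsq, hcastn, huw, Finset.prod_insert hjw, Finset.prod_div_distrib]
    field_simp
  refine ⟨hpart1, ?_⟩
  have hDpos : 0 < ∏ j ∈ u, ((b j : ℝ) - 1) := by
    apply Finset.prod_pos
    intro j hj
    have : (2:ℝ) ≤ (b j : ℝ) := by exact_mod_cast (hprime j hj).two_le
    linarith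
  set C := ∑ v ∈ u.powerset, ((∏ j ∈ v, b j : ℕ) : ℝ) ^ 2 with hC
  have hC0 : 0 ≤ C := Finset.sum_nonneg fun v _ => by positivity
  have hbdd : BddAbove {x : ℝ | ∃ n : ℕ, 1 ≤ n ∧ x = Gn b (fun _ => 0) u n} := by
    refine ⟨C / (∏ j ∈ u, ((b j : ℝ) - 1)), ?_⟩
    rintro x ⟨n, hn, rfl⟩
    have hGtle : Gt b (fun _ => 0) u n ≤ C := by
      rw [Gt_eq b u hu hb1 n, hC]
      apply Finset.sum_le_sum
      intro v hv
      have hvpos : 0 < ∏ j ∈ v, b j :=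
        Finset.prod_pos fun j hj => hb1 j (Finset.mem_powerset.mp hv hj)
      have hele : ((n % ∏ j ∈ v, b j) * ((∏ j ∈ v, b j) - n % ∏ j ∈ v, b j))
          ≤ (∏ j ∈ v, b j) ^ 2 := by
        have h1 : n % (∏ j ∈ v, b j) ≤ ∏ j ∈ v, b j := (Nat.mod_lt n hvpos).le
        calc ((n % ∏ j ∈ v, b j) * ((∏ j ∈ v, b j) - n % ∏ j ∈ v, b j))
            ≤ (∏ j ∈ v, b j) * (∏ j ∈ v, b j) := Nat.mul_le_mul h1 (Nat.sub_le _ _)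
          _ = (∏ j ∈ v, b j) ^ 2 := (sq _).symm
      have heleR : (((n % ∏ j ∈ v, b j) * ((∏ j ∈ v, b j) - n % ∏ j ∈ v, b j) : ℕ) : ℝ)
          ≤ ((∏ j ∈ v, b j : ℕ) : ℝ) ^ 2 := by exact_mod_cast hele
      have hpos' : (0:ℝ) ≤ (((n % ∏ j ∈ v, b j) * ((∏ j ∈ v, b j) - n % ∏ j ∈ v, b j) : ℕ) : ℝ) :=
        Nat.cast_nonneg _
      rcases neg_one_pow_eq_or ℝ (u \ v).card with h | h <;> rw [h] <;> linarith
    have hnR : (1:ℝ) ≤ (n:ℝ) := by exact_mod_cast hn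
    have hn0 : (0:ℝ) < (n:ℝ) := by linarith
    have hnD : (0:ℝ) < (n:ℝ) * ∏ j ∈ u, ((b j : ℝ) - 1) := mul_pos hn0 hDpos
    show Gn b (fun _ => 0) u n ≤ _
    unfold Gn
    calc Gt b (fun _ => 0) u n / ((n:ℝ) * ∏ j ∈ u, ((b j : ℝ) - 1))
        ≤ C / ((n:ℝ) * ∏ j ∈ u, ((b j : ℝ) - 1)) := (div_le_div_iff_of_pos_right hnD).mpr hGtle
      _ ≤ C / (∏ j ∈ u, ((b j : ℝ) - 1)) := by
          apply div_le_div_of_nonneg_left hC0 hDpos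
          nlinarith
  have hmem : (∏ j ∈ w, ((b j : ℝ) + 1) / (b j : ℝ)) ∈
      {x : ℝ | ∃ n : ℕ, 1 ≤ n ∧ x = Gn b (fun _ => 0) u n} :=
    ⟨nstar, hnpos, hpart1.symm⟩
  exact le_csSup hbdd hmem
end
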